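/- Let D be a digraph, let X be a set of vertices of D such that the induced subdigraph D[X] is strongly connected, and let C be a directed cycle of D all of whose vertices lie in X. Let D' be the digraph obtained from D by reversing the direction of every arc of C. Then the induced subdigraph D'[X] is strongly connected. -/
import Mathlib


variable {V : Type*}

/-- `M` is the edge set of a perfect matching of `G`: a set of pairwise disjoint
edges of `G` covering every vertex. -/
def IsPerfectMatchingSet (G : SimpleGraph V) (M : Set (Sym2 V)) : Prop :=
  M ⊆ G.edgeSet ∧ ∀ v : V, ∃! e, e ∈ M ∧ v ∈ e

/-- `C` is the edge set of a cycle of `G`. -/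
def IsCycleEdgeSet (G : SimpleGraph V) (C : Set (Sym2 V)) : Prop :=
  ∃ (v : V) (w : G.Walk v v), w.IsCycle ∧ C = {e | e ∈ w.edges}

/-- `C` is a cycle of `G` whose edges alternate between the matching `M` and its
complement: at every vertex of the cycle, exactly one of the two incident cycle
edges belongs to `M`. -/
def IsAlternatingCycle (G : SimpleGraph V) (M C : Set (Sym2 V)) : Prop :=
  IsCycleEdgeSet G C ∧
    ∀ v : V, ∀ e₁ ∈ C, ∀ e₂ ∈ C, e₁ ≠ e₂ → v ∈ e₁ → v ∈ e₂ → (e₁ ∈ M ↔ e₂ ∉ M)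

/-- A set of edges that is a matching: its edges are pairwise vertex-disjoint. -/
def IsMatchingSet (M : Set (Sym2 V)) : Prop :=
  ∀ e₁ ∈ M, ∀ e₂ ∈ M, e₁ ≠ e₂ → ∀ v : V, v ∈ e₁ → v ∉ e₂

/-- `G` is bipartite with parts `A` and `B`: the two parts partition the vertex
set and each part is an independent set. -/
def IsBipartiteWith (G : SimpleGraph V) (A B : Set V) : Prop :=
  Disjoint A B ∧ A ∪ B = Set.univ ∧
    ∀ ⦃u v⦄, G.Adj u v → ¬(u ∈ A ∧ v ∈ A) ∧ ¬(u ∈ B ∧ v ∈ B)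

/-- An orientation of the undirected graph `G`: every edge of `G` gets exactly
one of its two possible directions. -/
structure GraphOrientation (G : SimpleGraph V) where
  adj : V → V → Prop
  adj_of : ∀ u v, adj u v → G.Adj u v
  eq_not_rev : ∀ u v, G.Adj u v → (adj u v ↔ ¬ adj v u)

/-- `C` is the edge set of a cycle of `G` that is consistently directed in the
orientation `D`. -/
def GraphOrientation.IsDirectedCycle {G : SimpleGraph V} (D : GraphOrientation G)
    (C : Set (Sym2 V)) : Prop :=
  ∃ (v : V) (w : G.Walk v v), w.IsCycle ∧ C = {e | e ∈ w.edges} ∧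
    ∀ d ∈ w.darts, D.adj d.toProd.1 d.toProd.2

/-- `D'` is obtained from the orientation `D` by flipping the cycle `C`:
every edge of `C` is reversed, all other edges keep their direction. -/
def GraphOrientation.IsFlip {G : SimpleGraph V} (D D' : GraphOrientation G)
    (C : Set (Sym2 V)) : Prop :=
  ∀ u v, G.Adj u v →
    ((s(u, v) ∈ C → (D'.adj u v ↔ D.adj v u)) ∧ (s(u, v) ∉ C → (D'.adj u v ↔ D.adj u v)))

/-- The subdigraph of the digraph `D` induced on the vertex set `X` is strongly
connected: any vertex of `X` reaches any other by a directed path inside `X`. -/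
def StronglyConnectedOn (D : V → V → Prop) (X : Set V) : Prop :=
  ∀ u ∈ X, ∀ v ∈ X, Relation.ReflTransGen (fun a b => D a b ∧ a ∈ X ∧ b ∈ X) u v

/-- The list `l` of vertices is a directed cycle of the digraph `D`: a cyclic
sequence of at least two distinct vertices, each consecutive pair (cyclically)
joined by an arc of `D`. The cyclically consecutive pairs of `l` are exactly the
entries of `l.zip (l.rotate 1)`. -/
def IsDirectedCycleList (D : V → V → Prop) (l : List V) : Prop :=
  2 ≤ l.length ∧ l.Nodup ∧ ∀ p ∈ l.zip (l.rotate 1), D p.1 p.2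

/-- Let `D` be a digraph, `X` a vertex set with `D[X]` strongly
connected, and `C` a directed cycle of `D` (given as a vertex list `l`) all of
whose vertices lie in `X`. If `D'` is obtained from `D` by reversing every arc
of `C`, then `D'[X]` is still strongly connected. -/
theorem strongly_connected_after_cycle_reversal
    {V : Type*} (D : V → V → Prop) (X : Set V)
    (hX : StronglyConnectedOn D X)
    (l : List V) (hC : IsDirectedCycleList D l) (hCX : ∀ v ∈ l, v ∈ X)
    (D' : V → V → Prop)
    (hD' : ∀ u v, D' u v ↔
      ((v, u) ∈ l.zip (l.rotate 1) ∨ (D u v ∧ (u, v) ∉ l.zip (l.rotate 1)))) :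
    StronglyConnectedOn D' X := by
  obtain ⟨hlen, hnodup, -⟩ := hC
  set R : V → V → Prop := fun a b => D' a b ∧ a ∈ X ∧ b ∈ X with hR
  have hnpos : 0 < l.length := by omega
  have hzmem : ∀ i : ℕ, (l[i % l.length]'(Nat.mod_lt _ hnpos),
      l[(i + 1) % l.length]'(Nat.mod_lt _ hnpos)) ∈ l.zip (l.rotate 1) := by
    intro i
    have hlt : i % l.length < (l.zip (l.rotate 1)).length := by
      simp only [List.length_zip, List.length_rotate, Nat.min_self]
      exact Nat.mod_lt _ hnpos
    have h := List.getElem_mem hlt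
    rw [List.getElem_zip, List.getElem_rotate] at h
    have he : (i % l.length + 1) % l.length = (i + 1) % l.length := Nat.mod_add_mod ..
    simpa only [he] using h
  have hstep : ∀ i : ℕ, R (l[(i + 1) % l.length]'(Nat.mod_lt _ hnpos))
      (l[i % l.length]'(Nat.mod_lt _ hnpos)) := by
    intro i
    exact ⟨(hD' _ _).2 (Or.inl (hzmem i)), hCX _ (List.getElem_mem _),
      hCX _ (List.getElem_mem _)⟩
  have hreach : ∀ (k j : ℕ) (hj : j < l.length),
      Relation.ReflTransGen R (l[(j + k) % l.length]'(Nat.mod_lt _ hnpos)) (l[j]'hj) := by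
    intro k
    induction k with
    | zero =>
      intro j hj
      have h0 : (j + 0) % l.length = j := by rw [Nat.add_zero, Nat.mod_eq_of_lt hj]
      simp only [h0]
      exact Relation.ReflTransGen.refl
    | succ k ih =>
      intro j hj
      have h2 : (j + (k + 1)) % l.length = (j + k + 1) % l.length := by
        rw [Nat.add_assoc]
      simp only [h2]
      exact Relation.ReflTransGen.head (hstep (j + k)) (ih j hj)
  have hcyc : ∀ a ∈ l, ∀ b ∈ l, Relation.ReflTransGen R a b := by
    intro a ha b hb
    obtain ⟨i, hi, rfl⟩ := List.getElem_of_mem ha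
    obtain ⟨j, hj, rfl⟩ := List.getElem_of_mem hb
    have h := hreach (l.length + i - j) j hj
    have h3 : (j + (l.length + i - j)) % l.length = i := by
      have h4 : j + (l.length + i - j) = l.length + i := by omega
      rw [h4, Nat.add_mod_left, Nat.mod_eq_of_lt hi]
    simpa only [h3] using h
  intro u hu v hv
  have h := hX u hu v hv
  induction h with
  | refl => exact Relation.ReflTransGen.refl
  | @tail b c hub hstep' ih =>
    obtain ⟨hDbc, hbX, hcX⟩ := hstep'
    refine (ih hbX).trans ?_
    by_cases hz : (b, c) ∈ l.zip (l.rotate 1)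
    · obtain ⟨hb, hc⟩ := List.of_mem_zip hz
      exact hcyc _ hb _ ((List.mem_rotate).1 hc)
    · exact Relation.ReflTransGen.single ⟨(hD' _ _).2 (Or.inr ⟨hDbc, hz⟩), hbX, hcX⟩
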